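/- For all 0 < c₁ < c₂ < c̄ and every x ∈ ℝ, V^{c₂}(x) < V^{c₁}(x); that is, for each fixed x the value c ↦ V^c(x) is strictly decreasing in the intervention cost on (0, c̄). -/

import Mathlib

/-- `h_A(y) = A θ e^{θ y} − A θ e^{−θ y} − 2 k₂ y`. -/
noncomputable def hFun (θ k₂ A y : ℝ) : ℝ :=
  A * θ * Real.exp (θ * y) - A * θ * Real.exp (-(θ * y)) - 2 * k₂ * y

/-- `g(A) = −A e^{θ ȳ(A)} − A e^{−θ ȳ(A)} + k₂ ȳ(A)² + 2A`. -/
noncomputable def gFun (θ k₂ : ℝ) (ybar : ℝ → ℝ) (A : ℝ) : ℝ :=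
  -A * Real.exp (θ * ybar A) - A * Real.exp (-(θ * ybar A)) + k₂ * (ybar A) ^ 2 + 2 * A

/-- `φ_A(x) = A e^{θ(x−x_v)} + A e^{−θ(x−x_v)} − k₂ (x−x_v)² + k₀`. -/
noncomputable def phiFun (θ k₂ k₀ xv A x : ℝ) : ℝ :=
  A * Real.exp (θ * (x - xv)) + A * Real.exp (-(θ * (x - xv))) - k₂ * (x - xv) ^ 2 + k₀

/-- `V^c(x) = φ_{A(c)}(x)` on `(x_v − ȳ(c), x_v + ȳ(c))`, and `φ_{A(c)}(x_v) − c` otherwise. -/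
noncomputable def VFun (θ k₂ k₀ xv : ℝ) (Ac ybc : ℝ → ℝ) (c x : ℝ) : ℝ :=
  if xv - ybc c < x ∧ x < xv + ybc c then phiFun θ k₂ k₀ xv (Ac c) x
  else phiFun θ k₂ k₀ xv (Ac c) xv - c

/-- `ξ(y) = k₂ y² − (2k₂/θ) ((e^{θy}+e^{−θy}−2)/(e^{θy}−e^{−θy})) y`. -/
noncomputable def xiFun (θ k₂ y : ℝ) : ℝ :=
  k₂ * y ^ 2 -
    (2 * k₂ / θ) *
      ((Real.exp (θ * y) + Real.exp (-(θ * y)) - 2) /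
        (Real.exp (θ * y) - Real.exp (-(θ * y)))) * y



/-- `t cosh t - sinh t` positive for `t > 0`. -/
lemma my_sinh_lt_mul_cosh {t : ℝ} (ht : 0 < t) : Real.sinh t < t * Real.cosh t := by
  have h : StrictMonoOn (fun t => t * Real.cosh t - Real.sinh t) (Set.Ici 0) := by
    apply strictMonoOn_of_hasDerivWithinAt_pos (convex_Ici 0)
    · exact ((continuous_id.mul Real.continuous_cosh).sub Real.continuous_sinh).continuousOn
    · intro x hx
      exact (((hasDerivAt_id x).mul (Real.hasDerivAt_cosh x)).sub
        (Real.hasDerivAt_sinh x)).hasDerivWithinAt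
    · intro x hx
      rw [interior_Ici] at hx
      have hx0 : (0:ℝ) < x := hx
      have hs : 0 < Real.sinh x := by
        rwa [Real.sinh_pos_iff]
      simp only [id_eq, one_mul]
      nlinarith [mul_pos hx0 hs]
  have h0 : (0:ℝ) ∈ Set.Ici (0:ℝ) := Set.mem_Ici.mpr le_rfl
  have ht' : t ∈ Set.Ici (0:ℝ) := le_of_lt ht
  have := h h0 ht' ht
  simp only [Real.cosh_zero, Real.sinh_zero, mul_one, zero_mul, sub_zero] at this
  linarith

/-- `sinh t / t` is strictly increasing on `(0, ∞)`. -/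
lemma my_sinh_div_strictMono : StrictMonoOn (fun t => Real.sinh t / t) (Set.Ioi (0:ℝ)) := by
  apply strictMonoOn_of_hasDerivWithinAt_pos (convex_Ioi 0)
  · exact Real.continuous_sinh.continuousOn.div continuousOn_id fun x hx => ne_of_gt hx
  · intro x hx
    rw [interior_Ioi] at hx
    exact ((Real.hasDerivAt_sinh x).div (hasDerivAt_id x) (ne_of_gt hx)).hasDerivWithinAt
  · intro x hx
    rw [interior_Ioi] at hx
    have hx0 : (0:ℝ) < x := hx
    apply div_pos
    · have := my_sinh_lt_mul_cosh hx0
      simp only [id_eq, mul_one]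
      nlinarith
    · positivity

lemma my_sinh_ratio_lt {t₁ t₂ : ℝ} (h1 : 0 < t₁) (h12 : t₁ < t₂) :
    t₂ * Real.sinh t₁ < t₁ * Real.sinh t₂ := by
  have h2 : (0:ℝ) < t₂ := lt_trans h1 h12
  have := my_sinh_div_strictMono (Set.mem_Ioi.mpr h1) (Set.mem_Ioi.mpr h2) h12
  rw [div_lt_div_iff₀ h1 h2] at this
  linarith

lemma my_sinh_ratio_le {t₁ t₂ : ℝ} (h1 : 0 < t₁) (h12 : t₁ ≤ t₂) :
    t₂ * Real.sinh t₁ ≤ t₁ * Real.sinh t₂ := by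
  rcases eq_or_lt_of_le h12 with rfl | h
  · ring_nf; exact le_refl _
  · exact le_of_lt (my_sinh_ratio_lt h1 h)

/-- `t + 4/(e^t+1)` is strictly increasing on `[0, ∞)`. -/
lemma my_f_strictMono : StrictMonoOn (fun t => t + 4 * (Real.exp t + 1)⁻¹) (Set.Ici (0:ℝ)) := by
  apply strictMonoOn_of_hasDerivWithinAt_pos (convex_Ici 0)
  · apply Continuous.continuousOn
    exact continuous_id.add (continuous_const.mul
      ((Real.continuous_exp.add continuous_const).inv₀ fun x => (add_pos (Real.exp_pos x) one_pos).ne'))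
  · intro x hx
    have h1 : HasDerivAt (fun t => Real.exp t + 1) (Real.exp x) x :=
      (Real.hasDerivAt_exp x).add_const 1
    have h2 : HasDerivAt (fun t => (Real.exp t + 1)⁻¹)
        (-(Real.exp x) / (Real.exp x + 1) ^ 2) x := h1.inv (by positivity)
    exact ((hasDerivAt_id x).add (h2.const_mul 4)).hasDerivWithinAt
  · intro x hx
    rw [interior_Ici] at hx
    have hE : 1 < Real.exp x := by
      calc (1:ℝ) = Real.exp 0 := by simp
      _ < Real.exp x := Real.exp_lt_exp.mpr hx
    have hE1 : (0:ℝ) < Real.exp x + 1 := by positivity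
    have key : 1 + 4 * (-(Real.exp x) / (Real.exp x + 1) ^ 2)
        = (Real.exp x - 1) ^ 2 / (Real.exp x + 1) ^ 2 := by
      field_simp
      ring
    rw [key]
    apply div_pos
    · have : 0 < Real.exp x - 1 := by linarith
      positivity
    · positivity

/-- From `hFun θ k₂ A y = 0` we get `A θ sinh(θ y) = k₂ y`. -/
lemma my_hFun_sinh {θ k₂ A y : ℝ} (h : hFun θ k₂ A y = 0) :
    A * θ * Real.sinh (θ * y) = k₂ * y := by
  have hs : Real.sinh (θ * y) = (Real.exp (θ * y) - Real.exp (-(θ * y))) / 2 :=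
    Real.sinh_eq (θ * y)
  simp only [hFun] at h
  linear_combination (1/2) * h + (A * θ) * hs

/-- `ψ_A(s) = A e^{θs} + A e^{-θs} - k₂ s²` is antitone on `[0, ȳ]`. -/
lemma my_psi_anti {θ k₂ A y : ℝ} (hθ : 0 < θ) (hk : 0 < k₂) (hA : 0 < A) (hy : 0 < y)
    (h : hFun θ k₂ A y = 0) :
    AntitoneOn (fun s => A * Real.exp (θ * s) + A * Real.exp (-(θ * s)) - k₂ * s ^ 2)
      (Set.Icc 0 y) := by
  have hkey := my_hFun_sinh h
  apply antitoneOn_of_hasDerivWithinAt_nonpos (convex_Icc 0 y)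
  · apply Continuous.continuousOn
    continuity
  · intro s hs
    have h1 : HasDerivAt (fun s : ℝ => θ * s) θ s := by
      simpa using (hasDerivAt_id s).const_mul θ
    have h2 : HasDerivAt (fun s : ℝ => Real.exp (θ * s)) (Real.exp (θ * s) * θ) s :=
      (Real.hasDerivAt_exp (θ * s)).comp s h1
    have h3 : HasDerivAt (fun s : ℝ => Real.exp (-(θ * s))) (Real.exp (-(θ * s)) * (-θ)) s :=
      by have hn : HasDerivAt (fun s : ℝ => -(θ * s)) (-θ) s := h1.neg
         exact (Real.hasDerivAt_exp (-(θ * s))).comp s hn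
    have h4 : HasDerivAt (fun s : ℝ => k₂ * s ^ 2) (k₂ * (2 * s)) s := by
      simpa using (hasDerivAt_pow 2 s).const_mul k₂
    exact (((h2.const_mul A).add (h3.const_mul A)).sub h4).hasDerivWithinAt
  · intro s hs
    rw [interior_Icc] at hs
    obtain ⟨hs0, hsy⟩ := hs
    -- need: A θ (e^{θs} - e^{-θs}) ≤ 2 k₂ s, i.e. 2 A θ sinh(θ s) ≤ 2 k₂ s
    have hsinh : Real.exp (θ * s) - Real.exp (-(θ * s)) = 2 * Real.sinh (θ * s) := by
      rw [Real.sinh_eq]; ring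
    have hratio : (θ * y) * Real.sinh (θ * s) ≤ (θ * s) * Real.sinh (θ * y) :=
      my_sinh_ratio_le (by positivity) (by nlinarith)
    -- A θ sinh(θ y) = k₂ y ; want A θ sinh (θ s) ≤ k₂ s
    have hgoal : A * θ * Real.sinh (θ * s) ≤ k₂ * s := by
      have h5 : A * (θ * y * Real.sinh (θ * s)) ≤ A * (θ * s * Real.sinh (θ * y)) :=
        mul_le_mul_of_nonneg_left hratio hA.le
      have h6 : A * (θ * s * Real.sinh (θ * y)) = k₂ * s * y := by
        linear_combination s * hkey
      nlinarith [h5, h6, hy]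
    have h7 : A * θ * (Real.exp (θ * s) - Real.exp (-(θ * s)))
        = 2 * (A * θ * Real.sinh (θ * s)) := by rw [hsinh]; ring
    linarith [h7, hgoal]

/-- `c` as a function of `ȳ` only. -/
lemma my_c_formula {θ k₂ A y c : ℝ} (hθ : 0 < θ) (hA : 0 < A) (hy : 0 < y)
    (e : hFun θ k₂ A y = 0)
    (g : -A * Real.exp (θ * y) - A * Real.exp (-(θ * y)) + k₂ * y ^ 2 + 2 * A = c) :
    c = k₂ / θ ^ 2 * ((θ * y) * ((θ * y) + 4 * (Real.exp (θ * y) + 1)⁻¹ - 2)) := by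
  set E := Real.exp (θ * y) with hE
  set F := Real.exp (-(θ * y)) with hF
  have hEF : E * F = 1 := by
    rw [hE, hF, ← Real.exp_add]; simp
  have hEpos : 0 < E := Real.exp_pos _
  have hE1 : 0 < E + 1 := by linarith
  simp only [hFun] at e
  rw [div_mul_eq_mul_div, eq_div_iff (by positivity : (θ:ℝ)^2 ≠ 0)]
  field_simp
  linear_combination (-θ*(1+E))*g + (-(E-1))*e + (-2*θ*A)*hEF

lemma my_key {θ k₂ A₁ y₁ c₁ A₂ y₂ c₂ : ℝ} (hθ : 0 < θ) (hk : 0 < k₂)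
    (hA₁ : 0 < A₁) (hA₂ : 0 < A₂) (hy₁ : 0 < y₁) (hy₂ : 0 < y₂)
    (e1 : hFun θ k₂ A₁ y₁ = 0) (e2 : hFun θ k₂ A₂ y₂ = 0)
    (g1 : -A₁ * Real.exp (θ * y₁) - A₁ * Real.exp (-(θ * y₁)) + k₂ * y₁ ^ 2 + 2 * A₁ = c₁)
    (g2 : -A₂ * Real.exp (θ * y₂) - A₂ * Real.exp (-(θ * y₂)) + k₂ * y₂ ^ 2 + 2 * A₂ = c₂)
    (hc : c₁ < c₂) : y₁ < y₂ ∧ A₂ < A₁ := by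
  have hc1 := my_c_formula hθ hA₁ hy₁ e1 g1
  have hc2 := my_c_formula hθ hA₂ hy₂ e2 g2
  have hy12 : y₁ < y₂ := by
    by_contra hcon
    push_neg at hcon
    have ht : θ * y₂ ≤ θ * y₁ := by nlinarith
    have hm2 : θ * y₂ ∈ Set.Ici (0:ℝ) := Set.mem_Ici.mpr (by positivity)
    have hm1 : θ * y₁ ∈ Set.Ici (0:ℝ) := Set.mem_Ici.mpr (by positivity)
    have hf : (θ * y₂) + 4 * (Real.exp (θ * y₂) + 1)⁻¹
        ≤ (θ * y₁) + 4 * (Real.exp (θ * y₁) + 1)⁻¹ :=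
      my_f_strictMono.monotoneOn hm2 hm1 ht
    have hf0 : 2 < (θ * y₂) + 4 * (Real.exp (θ * y₂) + 1)⁻¹ := by
      have h0 : (0:ℝ) ∈ Set.Ici (0:ℝ) := Set.mem_Ici.mpr le_rfl
      have := my_f_strictMono h0 hm2 (by positivity)
      norm_num [Real.exp_zero] at this
      linarith
    have hle : c₂ ≤ c₁ := by
      rw [hc1, hc2]
      have h2pos : (0:ℝ) < k₂ / θ ^ 2 := by positivity
      apply mul_le_mul_of_nonneg_left _ h2pos.le
      apply mul_le_mul ht (by linarith) (by linarith) (by positivity)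
    linarith
  have k1 := my_hFun_sinh e1
  have k2' := my_hFun_sinh e2
  have hs1 : 0 < Real.sinh (θ * y₁) := Real.sinh_pos_iff.mpr (by positivity)
  have hs2 : 0 < Real.sinh (θ * y₂) := Real.sinh_pos_iff.mpr (by positivity)
  have hr : (θ * y₂) * Real.sinh (θ * y₁) < (θ * y₁) * Real.sinh (θ * y₂) :=
    my_sinh_ratio_lt (by positivity) (by nlinarith)
  have e9 : A₂ * (θ * Real.sinh (θ * y₂) * Real.sinh (θ * y₁))
      = k₂ * y₂ * Real.sinh (θ * y₁) := by linear_combination (Real.sinh (θ * y₁)) * k2'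
  have e10 : A₁ * (θ * Real.sinh (θ * y₂) * Real.sinh (θ * y₁))
      = k₂ * y₁ * Real.sinh (θ * y₂) := by linear_combination (Real.sinh (θ * y₂)) * k1
  have h11 := mul_lt_mul_of_pos_left hr hk
  have h9 : A₂ * (θ * Real.sinh (θ * y₂) * Real.sinh (θ * y₁))
      < A₁ * (θ * Real.sinh (θ * y₂) * Real.sinh (θ * y₁)) := by
    rw [e9, e10]
    nlinarith [h11, hθ]
  have hP : 0 < θ * Real.sinh (θ * y₂) * Real.sinh (θ * y₁) := by positivity
  exact ⟨hy12, lt_of_mul_lt_mul_right (by nlinarith [h9]) hP.le⟩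

set_option maxHeartbeats 1600000 in
theorem stmt_15 (ρ σ Δ b θ k₂ k₀ α xv yv : ℝ)
    (hρ : 0 < ρ) (hσ : 0 < σ) (hΔ : 0 < Δ) (hb : 0 ≤ b)
    (hθ : θ = Real.sqrt (2 * ρ) / σ)
    (hα : α = (Δ + b) / Δ ^ 2)
    (hxv : xv = Δ * (Δ + 2 * b) / (2 * (Δ + b)))
    (hyv : yv = Δ ^ 2 / (4 * (Δ + b)))
    (hk₂ : k₂ = α / ρ)
    (hk₀ : k₀ = yv / ρ - 2 * k₂ / θ ^ 2)
    (ybarA : ℝ → ℝ)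
    (hybarA : ∀ A : ℝ, 0 < A → A < k₂ / θ ^ 2 →
      0 < ybarA A ∧ hFun θ k₂ A (ybarA A) = 0)
    (Ac : ℝ → ℝ)
    (hAc : ∀ c : ℝ, 0 < c →
      0 < Ac c ∧ Ac c < k₂ / θ ^ 2 ∧ gFun θ k₂ ybarA (Ac c) = c) :
    ∀ c₁ c₂ : ℝ, 0 < c₁ → c₁ < c₂ → c₂ < xiFun θ k₂ (Δ - xv) →
      ∀ x : ℝ,
        VFun θ k₂ k₀ xv Ac (fun c => ybarA (Ac c)) c₂ x <
          VFun θ k₂ k₀ xv Ac (fun c => ybarA (Ac c)) c₁ x := by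
  intro c₁ c₂ hc₁ hc12 _ x
  have hθ0 : 0 < θ := by
    rw [hθ]; exact div_pos (Real.sqrt_pos.mpr (by linarith)) hσ
  have hk2 : 0 < k₂ := by
    rw [hk₂, hα]; positivity
  obtain ⟨hA1pos, hA1lt, hg1⟩ := hAc c₁ hc₁
  obtain ⟨hA2pos, hA2lt, hg2⟩ := hAc c₂ (lt_trans hc₁ hc12)
  obtain ⟨hy1pos, he1⟩ := hybarA _ hA1pos hA1lt
  obtain ⟨hy2pos, he2⟩ := hybarA _ hA2pos hA2lt
  simp only [gFun] at hg1 hg2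
  simp only [VFun]
  beta_reduce
  set A₁ := Ac c₁ with hA₁def
  set A₂ := Ac c₂ with hA₂def
  set y₁ := ybarA A₁ with hy₁def
  set y₂ := ybarA A₂ with hy₂def
  clear_value y₁ y₂
  clear_value A₁ A₂
  obtain ⟨hy12, hA21⟩ := my_key hθ0 hk2 hA1pos hA2pos hy1pos hy2pos he1 he2 hg1 hg2 hc12
  have hphixv : ∀ A : ℝ, phiFun θ k₂ k₀ xv A xv = 2 * A + k₀ := by
    intro A; simp [phiFun]; ring
  by_cases h1 : xv - y₁ < x ∧ x < xv + y₁
  · have h2 : xv - y₂ < x ∧ x < xv + y₂ := ⟨by linarith [h1.1], by linarith [h1.2]⟩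
    rw [if_pos h2, if_pos h1]
    simp only [phiFun]
    have p1 := Real.exp_pos (θ * (x - xv))
    have p2 := Real.exp_pos (-(θ * (x - xv)))
    nlinarith [mul_pos (sub_pos.mpr hA21) p1, mul_pos (sub_pos.mpr hA21) p2]
  · by_cases h2 : xv - y₂ < x ∧ x < xv + y₂
    · rw [if_pos h2, if_neg h1, hphixv]
      set s := |x - xv| with hs
      have hs_y1 : y₁ ≤ s := by
        rcases le_or_gt x (xv - y₁) with h | h
        · exact le_abs.mpr (Or.inr (by linarith))
        · have hxr : xv + y₁ ≤ x := by
            by_contra hno; push_neg at hno; exact h1 ⟨h, hno⟩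
          exact le_abs.mpr (Or.inl (by linarith))
      have hs_y2 : s ≤ y₂ := le_of_lt (abs_lt.mpr ⟨by linarith [h2.1], by linarith [h2.2]⟩)
      have hphi : phiFun θ k₂ k₀ xv A₂ x
          = A₂ * Real.exp (θ * s) + A₂ * Real.exp (-(θ * s)) - k₂ * s ^ 2 + k₀ := by
        simp only [phiFun]
        rcases abs_cases (x - xv) with ⟨h', _⟩ | ⟨h', _⟩
        · rw [hs, h']
        · rw [hs, h']
          have e1' : θ * -(x - xv) = -(θ * (x - xv)) := by ring
          have e2' : -(θ * -(x - xv)) = θ * (x - xv) := by ring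
          rw [e1', neg_neg]
          ring
      have hanti := my_psi_anti hθ0 hk2 hA2pos hy2pos he2
      have hmem1 : y₁ ∈ Set.Icc (0:ℝ) y₂ := ⟨hy1pos.le, hy12.le⟩
      have hmems : s ∈ Set.Icc (0:ℝ) y₂ := ⟨abs_nonneg _, hs_y2⟩
      have hle : A₂ * Real.exp (θ * s) + A₂ * Real.exp (-(θ * s)) - k₂ * s ^ 2
          ≤ A₂ * Real.exp (θ * y₁) + A₂ * Real.exp (-(θ * y₁)) - k₂ * y₁ ^ 2 :=
        hanti hmem1 hmems hs_y1
      have p1 := Real.exp_pos (θ * y₁)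
      have p2 := Real.exp_pos (-(θ * y₁))
      rw [hphi]
      nlinarith [mul_pos (sub_pos.mpr hA21) p1, mul_pos (sub_pos.mpr hA21) p2, hg1, hle]
    · rw [if_neg h2, if_neg h1, hphixv, hphixv]
      linarith
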